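/- arXiv:1611.08778 — 2 statements merged into one kernel-verified Lean document; each statement's English description precedes it below -/
import Mathlib

section
/- Let J ≥ 1, α > 0, h > 0, λ ∈ ℝ, and let A = −Â, where Â is the J×J real symmetric tridiagonal matrix with 2 on the diagonal and −1 on the sub- and superdiagonals. If Ψ : [0,∞) → ℂ^J is differentiable and satisfies Ψ'(t) = i( h^{−2} A Ψ(t) + i α Ψ(t) + λ F(Ψ(t)) Ψ(t) ) for all t ≥ 0, then ‖Ψ(t)‖² = e^{−2αt} ‖Ψ(0)‖² for all t ≥ 0. -/
/-- The `J × J` tridiagonal matrix with `2` on the diagonal and `-1` on the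
sub- and superdiagonals. -/
def Ahat (J : ℕ) : Matrix (Fin J) (Fin J) ℝ :=
  Matrix.of fun i j =>
    if i = j then 2
    else if (i.val : ℤ) - j.val = 1 ∨ (j.val : ℤ) - i.val = 1 then -1
    else 0

lemma Ahat_symm (J : ℕ) (i j : Fin J) : Ahat J i j = Ahat J j i := by
  unfold Ahat
  simp only [Matrix.of_apply]
  by_cases hij : i = j
  · simp [hij]
  · rw [if_neg hij, if_neg (Ne.symm hij)]
    congr 1
    exact propext (or_comm)

lemma sum_mulVec_conj_im (J : ℕ) (A : Matrix (Fin J) (Fin J) ℂ)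
    (hA : A = -((Ahat J).map (fun a => (a : ℂ)))) (v : Fin J → ℂ) :
    (∑ j, A.mulVec v j * (starRingEnd ℂ) (v j)).im = 0 := by
  set S : ℂ := ∑ j, A.mulVec v j * (starRingEnd ℂ) (v j) with hS
  have hsym : ∀ i j, A i j = A j i := by
    intro i j
    rw [hA]
    simp [Matrix.map_apply, Ahat_symm J i j]
  have hreal : ∀ i j, (starRingEnd ℂ) (A i j) = A i j := by
    intro i j
    rw [hA]
    simp [Matrix.map_apply, Complex.conj_ofReal]
  have hconj : (starRingEnd ℂ) S = S := by
    rw [hS]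
    simp only [Matrix.mulVec, dotProduct, map_sum, map_mul, Complex.conj_conj,
      Finset.sum_mul]
    rw [Finset.sum_comm]
    refine Finset.sum_congr rfl fun k _ => Finset.sum_congr rfl fun j _ => ?_
    rw [hreal, hsym]
    ring
  exact Complex.conj_eq_iff_im.mp hconj

/-- if `Ψ : [0,∞) → ℂ^J` is differentiable and solves
`Ψ' = i (h⁻² A Ψ + i α Ψ + λ F(Ψ) Ψ)` with `A = -Â`, then
`‖Ψ(t)‖² = e^{-2 α t} ‖Ψ(0)‖²` for all `t ≥ 0`. -/
theorem stmt_4 (J : ℕ) (hJ : 1 ≤ J) (α h : ℝ) (hα : 0 < α) (hh : 0 < h) (lam : ℝ)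
    (A : Matrix (Fin J) (Fin J) ℂ) (hA : A = -((Ahat J).map (fun a => (a : ℂ))))
    (Ψ : ℝ → Fin J → ℂ)
    (hode : ∀ t : ℝ, 0 ≤ t → ∀ j : Fin J,
      HasDerivWithinAt (fun s : ℝ => Ψ s j)
        (Complex.I * (((h ^ 2 : ℝ) : ℂ)⁻¹ * A.mulVec (Ψ t) j
          + Complex.I * (α : ℂ) * Ψ t j
          + (lam : ℂ) * ((‖Ψ t j‖ : ℂ)) ^ 2 * Ψ t j))
        (Set.Ici (0 : ℝ)) t) :
    ∀ t : ℝ, 0 ≤ t →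
      ∑ j, ‖Ψ t j‖ ^ 2
        = Real.exp (-2 * α * t) * ∑ j, ‖Ψ 0 j‖ ^ 2 := by
  classical
  set E : ℝ → ℝ := fun s => ∑ j, ‖Ψ s j‖ ^ 2 with hEdef
  have hEeq : ∀ s, E s = ∑ j, ((Ψ s j) * (starRingEnd ℂ) (Ψ s j)).re := by
    intro s
    simp [hEdef, Complex.mul_conj, Complex.sq_norm]
  have hEderiv : ∀ t : ℝ, 0 ≤ t → HasDerivWithinAt E (-2 * α * E t) (Set.Ici 0) t := by
    intro t ht
    set D : Fin J → ℂ := fun j => Complex.I * (((h ^ 2 : ℝ) : ℂ)⁻¹ * A.mulVec (Ψ t) j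
          + Complex.I * (α : ℂ) * Ψ t j
          + (lam : ℂ) * ((‖Ψ t j‖ : ℂ)) ^ 2 * Ψ t j) with hD
    have hterm : ∀ j, HasDerivWithinAt (fun s => ((Ψ s j) * (starRingEnd ℂ) (Ψ s j)).re)
        ((D j * (starRingEnd ℂ) (Ψ t j) + Ψ t j * (starRingEnd ℂ) (D j)).re)
        (Set.Ici 0) t := by
      intro j
      have h1 : HasDerivWithinAt (fun s => Ψ s j) (D j) (Set.Ici 0) t := hode t ht j
      have h2 : HasDerivWithinAt (fun s => (starRingEnd ℂ) (Ψ s j))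
          ((starRingEnd ℂ) (D j)) (Set.Ici 0) t := by
        simpa [Complex.star_def] using h1.star
      have h3 := h1.mul h2
      exact Complex.reCLM.hasFDerivAt.comp_hasDerivWithinAt t h3
    have hsum := HasDerivWithinAt.sum (u := Finset.univ) (fun j _ => hterm j)
    -- componentwise value of each term
    have h1 : ∀ j : Fin J, (D j * (starRingEnd ℂ) (Ψ t j)).re
        = -((h ^ 2)⁻¹) * (A.mulVec (Ψ t) j * (starRingEnd ℂ) (Ψ t j)).im
          - α * ‖Ψ t j‖ ^ 2 := by
      intro j
      have hab : ‖Ψ t j‖ ^ 2 = (Ψ t j).re ^ 2 + (Ψ t j).im ^ 2 := by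
        rw [Complex.sq_norm, Complex.normSq_apply]; ring
      simp only [hD, ← Complex.ofReal_pow, ← Complex.ofReal_inv]
      simp only [mul_add, add_mul, Complex.add_re, Complex.add_im, Complex.mul_re,
        Complex.mul_im, Complex.I_re, Complex.I_im, Complex.ofReal_re, Complex.ofReal_im,
        Complex.conj_re, Complex.conj_im]
      rw [hab]
      ring
    have hval : ∑ j, (D j * (starRingEnd ℂ) (Ψ t j) + Ψ t j * (starRingEnd ℂ) (D j)).re
        = -2 * α * E t := by
      have h2 : ∀ j : Fin J, (D j * (starRingEnd ℂ) (Ψ t j) + Ψ t j * (starRingEnd ℂ) (D j)).re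
          = 2 * (D j * (starRingEnd ℂ) (Ψ t j)).re := by
        intro j
        simp only [Complex.add_re, Complex.mul_re, Complex.conj_re, Complex.conj_im]
        ring
      rw [Finset.sum_congr rfl fun j _ => h2 j,
          Finset.sum_congr rfl fun j _ => by rw [h1 j]]
      have him : ∑ j, (A.mulVec (Ψ t) j * (starRingEnd ℂ) (Ψ t j)).im = 0 := by
        rw [← Complex.im_sum]
        exact sum_mulVec_conj_im J A hA (Ψ t)
      have hsplit : ∑ j, 2 * (-(h ^ 2)⁻¹ * (A.mulVec (Ψ t) j * (starRingEnd ℂ) (Ψ t j)).im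
              - α * ‖Ψ t j‖ ^ 2)
          = -2 * (h ^ 2)⁻¹ * (∑ j, (A.mulVec (Ψ t) j * (starRingEnd ℂ) (Ψ t j)).im)
            - 2 * α * (∑ j, ‖Ψ t j‖ ^ 2) := by
        rw [Finset.mul_sum, Finset.mul_sum, ← Finset.sum_sub_distrib]
        exact Finset.sum_congr rfl fun j _ => by ring
      rw [hsplit, him]
      simp [hEdef]
    have h5 : HasDerivWithinAt (fun s => ∑ j, ((Ψ s j) * (starRingEnd ℂ) (Ψ s j)).re)
        (-2 * α * E t) (Set.Ici 0) t := by
      rw [← hval]; simpa only [Finset.sum_fn] using hsum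
    exact h5.congr (fun s _ => hEeq s) (hEeq t)
  -- exponential identity
  have key : ∀ t : ℝ, 0 ≤ t → Real.exp (2 * α * t) * E t = E 0 := by
    intro t ht
    have hcont : ContinuousOn (fun u => Real.exp (2 * α * u) * E u) (Set.Icc 0 t) := by
      apply ContinuousOn.mul
      · exact (Real.continuous_exp.comp (continuous_const.mul continuous_id)).continuousOn
      · intro s hs
        exact ((hEderiv s hs.1).continuousWithinAt.mono
          (fun x hx => hx.1 : Set.Icc (0:ℝ) t ⊆ Set.Ici 0))
    have hder : ∀ s ∈ Set.Ico (0:ℝ) t,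
        HasDerivWithinAt (fun u => Real.exp (2 * α * u) * E u) 0 (Set.Ici s) s := by
      intro s hs
      have hexp : HasDerivWithinAt (fun u => Real.exp (2 * α * u))
          (2 * α * Real.exp (2 * α * s)) (Set.Ici s) s := by
        have := ((hasDerivAt_id s).const_mul (2*α)).exp
        simpa [mul_comm] using this.hasDerivWithinAt
      have hE' : HasDerivWithinAt E (-2 * α * E s) (Set.Ici s) s :=
        (hEderiv s hs.1).mono (Set.Ici_subset_Ici.mpr hs.1)
      have := hexp.mul hE'
      exact this.congr_deriv (by ring)
    have := constant_of_has_deriv_right_zero hcont hder t (Set.right_mem_Icc.mpr ht)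
    simpa using this
  intro t ht
  have hk := key t ht
  have hexp_pos : (0:ℝ) < Real.exp (2 * α * t) := Real.exp_pos _
  have : E t = Real.exp (-2 * α * t) * E 0 := by
    rw [← hk]
    rw [show (-2 : ℝ) * α * t = -(2 * α * t) by ring, Real.exp_neg]
    field_simp
  simpa [hEdef] using this
end

section
/- Let J ≥ 1, α, τ, h > 0, λ ∈ ℝ, let A = −Â with Â the J×J real symmetric tridiagonal matrix with 2 on the diagonal and −1 off the diagonal, and for v ∈ ℂ^J set f(v) = (−(α/2) I + i λ F(v)) τ. Suppose u, w ∈ ℂ^J satisfy the (noise-free) fully discrete scheme relation w − e^{f(u)} u = (i τ /(2h²)) A ( w + e^{f(u)} u ) − (ατ/4)( w + e^{f(u)} u ). Then ‖w‖² = e^{−ατ} ‖u‖² − (ατ/4) ‖w + e^{f(u)} u‖², and in particular ‖w‖² ≤ e^{−ατ} ‖u‖². -/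
/-- The diagonal matrix `f(v) = (-(α/2) I + i λ F(v)) τ`,
where `F(v) = diag(|v_1|², …, |v_J|²)`. -/
noncomputable def fmat (J : ℕ) (α τ lam : ℝ) (v : Fin J → ℂ) :
    Matrix (Fin J) (Fin J) ℂ :=
  (τ : ℂ) • ((-(α / 2 : ℂ)) • (1 : Matrix (Fin J) (Fin J) ℂ)
    + (Complex.I * (lam : ℂ)) • Matrix.diagonal (fun j => ((‖v j‖ : ℂ)) ^ 2))

/-- if `u, w ∈ ℂ^J` satisfy the noise-free fully discrete scheme relation
`w - e^{f(u)} u = (iτ/(2h²)) A (w + e^{f(u)} u) - (ατ/4)(w + e^{f(u)} u)` with `A = -Â`,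
then `‖w‖² = e^{-ατ} ‖u‖² - (ατ/4) ‖w + e^{f(u)} u‖²`, and in particular
`‖w‖² ≤ e^{-ατ} ‖u‖²`. -/
theorem stmt_5 (J : ℕ) (hJ : 1 ≤ J) (α τ h : ℝ) (hα : 0 < α) (hτ : 0 < τ) (hh : 0 < h)
    (lam : ℝ) (A : Matrix (Fin J) (Fin J) ℂ)
    (hA : A = -((Ahat J).map (fun a => (a : ℂ))))
    (u w : Fin J → ℂ)
    (hscheme : w - (NormedSpace.exp (fmat J α τ lam u)).mulVec u
      = (Complex.I * (τ : ℂ) / ((2 * h ^ 2 : ℝ) : ℂ))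
          • A.mulVec (w + (NormedSpace.exp (fmat J α τ lam u)).mulVec u)
        - ((α * τ / 4 : ℝ) : ℂ) • (w + (NormedSpace.exp (fmat J α τ lam u)).mulVec u)) :
    (∑ j, ‖w j‖ ^ 2
      = Real.exp (-(α * τ)) * ∑ j, ‖u j‖ ^ 2
        - (α * τ / 4) * ∑ j,
            ‖w j + (NormedSpace.exp (fmat J α τ lam u)).mulVec u j‖ ^ 2)
    ∧ ∑ j, ‖w j‖ ^ 2 ≤ Real.exp (-(α * τ)) * ∑ j, ‖u j‖ ^ 2 := by
  classical
  set d : Fin J → ℂ := fun j => (τ : ℂ) * (-(α / 2 : ℂ)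
      + Complex.I * (lam : ℂ) * ((‖u j‖ : ℂ)) ^ 2) with hd
  have hfd : fmat J α τ lam u = Matrix.diagonal d := by
    ext i j
    by_cases hij : i = j
    · subst hij
      simp [fmat, Matrix.one_apply, Matrix.diagonal, hd]
    · simp [fmat, Matrix.one_apply, Matrix.diagonal, hij]
  set v : Fin J → ℂ := (NormedSpace.exp (fmat J α τ lam u)).mulVec u with hv
  have hvj : ∀ j, v j = Complex.exp (d j) * u j := by
    intro j
    rw [hv, hfd, Matrix.exp_diagonal, Matrix.mulVec_diagonal]
    simp [Complex.exp_eq_exp_ℂ]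
  have hdre : ∀ j, (d j).re = -(α * τ) / 2 := by
    intro j
    simp [hd, Complex.mul_re, Complex.add_re, Complex.add_im, Complex.mul_im,
      ← Complex.ofReal_pow, Complex.ofReal_re, Complex.ofReal_im]
    ring
  have habs_v : ∀ j, (‖v j‖) ^ 2
      = Real.exp (-(α * τ)) * (‖u j‖) ^ 2 := by
    intro j
    rw [hvj j, norm_mul, mul_pow, Complex.norm_exp, sq (Real.exp _), ← Real.exp_add, hdre j]
    ring_nf
  -- properties of A
  have hAhat : ∀ i j : Fin J, Ahat J i j = Ahat J j i := by
    intro i j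
    simp only [Ahat, Matrix.of_apply]
    rcases eq_or_ne i j with rfl | hij
    · rfl
    · simp [hij, hij.symm, or_comm]
  have hAsym : ∀ i j, A i j = A j i := by
    intro i j; rw [hA]; simp [Matrix.map_apply, hAhat i j]
  have hAreal : ∀ i j, (starRingEnd ℂ) (A i j) = A i j := by
    intro i j; rw [hA]; simp [Matrix.map_apply]
  set x : Fin J → ℂ := w + v with hx
  set S : ℂ := ∑ j, (starRingEnd ℂ) (x j) * (w j - v j) with hS
  -- left computation
  have hSre : S.re = (∑ j, (‖w j‖) ^ 2) - ∑ j, (‖v j‖) ^ 2 := by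
    rw [hS, Complex.re_sum, ← Finset.sum_sub_distrib]
    apply Finset.sum_congr rfl
    intro j _
    rw [Complex.sq_norm, Complex.sq_norm, Complex.normSq_apply, Complex.normSq_apply]
    simp [hx, Complex.mul_re, Complex.add_re, Complex.add_im, Complex.sub_re, Complex.sub_im]
    ring
  -- Q is real
  set Q : ℂ := ∑ j, (starRingEnd ℂ) (x j) * (A.mulVec x j) with hQ
  have hmv : ∀ j, A.mulVec x j = ∑ k, A j k * x k := by
    intro j; simp [Matrix.mulVec, dotProduct]
  have hconjQ : (starRingEnd ℂ) Q = Q := by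
    have h1 : (starRingEnd ℂ) Q = ∑ j, ∑ k, A j k * (starRingEnd ℂ) (x k) * x j := by
      rw [hQ, map_sum]
      apply Finset.sum_congr rfl
      intro j _
      rw [hmv j, map_mul, Complex.conj_conj, map_sum, Finset.mul_sum]
      apply Finset.sum_congr rfl
      intro k _
      rw [map_mul, hAreal]
      ring
    rw [h1, Finset.sum_comm]
    rw [hQ]
    apply Finset.sum_congr rfl
    intro k _
    rw [hmv k, Finset.mul_sum]
    apply Finset.sum_congr rfl
    intro j _
    rw [hAsym j k]
    ring
  have hQim : Q.im = 0 := by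
    have := congrArg Complex.im hconjQ
    simp [Complex.conj_im] at this
    linarith
  -- right computation
  have hscheme' : ∀ j, w j - v j
      = (Complex.I * (τ : ℂ) / ((2 * h ^ 2 : ℝ) : ℂ)) * (A.mulVec x j)
        - ((α * τ / 4 : ℝ) : ℂ) * x j := by
    intro j
    have := congrFun hscheme j
    simp only [Pi.sub_apply, Pi.smul_apply, smul_eq_mul] at this
    exact this
  set c : ℂ := Complex.I * (τ : ℂ) / ((2 * h ^ 2 : ℝ) : ℂ) with hc
  have hcre : c.re = 0 := by
    rw [hc, Complex.div_ofReal_re]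
    simp
  have hN : ∀ j, (starRingEnd ℂ) (x j) * x j = ((‖x j‖) ^ 2 : ℝ) := by
    intro j
    rw [mul_comm, Complex.mul_conj, Complex.sq_norm]
  have hSval : S = c * Q - ((α * τ / 4 : ℝ) : ℂ) * ((∑ j, (‖x j‖) ^ 2 : ℝ) : ℂ) := by
    rw [hS, hQ]
    push_cast
    rw [Finset.mul_sum, Finset.mul_sum, ← Finset.sum_sub_distrib]
    apply Finset.sum_congr rfl
    intro j _
    have h2 := hN j
    rw [hscheme' j]
    push_cast at h2 ⊢
    linear_combination (-((α : ℂ) * τ / 4)) * h2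
  have hSre' : S.re = -(α * τ / 4) * ∑ j, (‖x j‖) ^ 2 := by
    rw [hSval, Complex.sub_re, Complex.mul_re, hcre, hQim, ← Complex.ofReal_mul,
      Complex.ofReal_re]
    ring
  have hvsum : (∑ j, (‖v j‖) ^ 2)
      = Real.exp (-(α * τ)) * ∑ j, (‖u j‖) ^ 2 := by
    rw [Finset.mul_sum]
    exact Finset.sum_congr rfl fun j _ => habs_v j
  have hxj : ∀ j, x j = w j + v j := fun j => rfl
  have key : ∑ j, (‖w j‖) ^ 2
      = Real.exp (-(α * τ)) * ∑ j, (‖u j‖) ^ 2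
        - (α * τ / 4) * ∑ j, (‖w j + v j‖) ^ 2 := by
    have := hSre.symm.trans hSre'
    have hxx : (∑ j, (‖x j‖) ^ 2) = ∑ j, (‖w j + v j‖) ^ 2 := by
      exact Finset.sum_congr rfl fun j _ => by rw [hxj j]
    rw [hxx] at this
    rw [← hvsum]
    linarith
  refine ⟨key, ?_⟩
  rw [key]
  have h1 : 0 ≤ (α * τ / 4) * ∑ j, (‖w j + v j‖) ^ 2 := by
    apply mul_nonneg (by positivity)
    exact Finset.sum_nonneg fun j _ => sq_nonneg _
  linarith
end
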